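/- For any positive root β of a finite root system, the length of the reflection s_β satisfies ℓ(s_β) ≤ 2⟨ρ, β∨⟩ - 1, where ρ is the half-sum of positive roots. -/

import Mathlib

/-- An axiomatized finite crystallographic root system datum, with weight/root
space `V` over `ℚ`, simple roots `α i`, an invariant inner product `B`,
Weyl group `W` acting faithfully on `V`, and the set of roots `isRoot`. -/
structure RootSystemData (I : Type) [Fintype I] [DecidableEq I] where
  V : Type
  [instAddCommGroup : AddCommGroup V]
  [instModule : Module ℚ V]
  W : Type
  [instGroup : Group W]
  α : I → V
  B : V →ₗ[ℚ] V →ₗ[ℚ] ℚ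
  toLin : W →* Module.End ℚ V
  s : I → W
  isRoot : V → Prop
  B_symm : ∀ x y, B x y = B y x
  B_pos : ∀ β, isRoot β → 0 < B β β
  B_inv : ∀ (w : W) (x y : V), B (toLin w x) (toLin w y) = B x y
  root_simple : ∀ i, isRoot (α i)
  root_inv : ∀ (w : W) (β : V), isRoot β → isRoot (toLin w β)
  root_gen : ∀ β, isRoot β → ∃ (w : W) (i : I), β = toLin w (α i)
  root_finite : (setOf isRoot).Finite
  indep : LinearIndependent ℚ α
  s_act : ∀ i x, toLin (s i) x = x - (2 * B (α i) x / B (α i) (α i)) • α i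
  gen : Subgroup.closure (Set.range s) = ⊤
  faithful : Function.Injective toLin
  root_int : ∀ β, isRoot β → ∃ c : I → ℤ, β = ∑ i, (c i : ℚ) • α i
  pos_or_neg : ∀ β, isRoot β →
    (∃ c : I → ℕ, β = ∑ i, (c i : ℚ) • α i) ∨ (∃ c : I → ℕ, -β = ∑ i, (c i : ℚ) • α i)

attribute [instance] RootSystemData.instAddCommGroup RootSystemData.instModule
  RootSystemData.instGroup

namespace RootSystemData

variable {I : Type} [Fintype I] [DecidableEq I] (R : RootSystemData I)

/-- `β` is a positive root. -/
def IsPos (β : R.V) : Prop :=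
  R.isRoot β ∧ ∃ c : I → ℕ, β = ∑ i, (c i : ℚ) • R.α i

/-- The finite set of positive roots. -/
noncomputable def posFinset : Finset R.V :=
  (Set.Finite.subset R.root_finite (fun _ hb => hb.1) : (setOf R.IsPos).Finite).toFinset

/-- Half the sum of the positive roots. -/
noncomputable def ρ : R.V := (2 : ℚ)⁻¹ • ∑ β ∈ R.posFinset, β

/-- The pairing `⟨x, β∨⟩` of `x` with the coroot of `β`. -/
noncomputable def coroot (β x : R.V) : ℚ := 2 * R.B β x / R.B β β

open Classical in
/-- The reflection `s_β ∈ W` in a root `β`. -/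
noncomputable def refl (β : R.V) : R.W :=
  if h : R.isRoot β then
    (R.root_gen β h).choose * R.s (R.root_gen β h).choose_spec.choose *
      (R.root_gen β h).choose⁻¹
  else 1

/-- The length function on the Weyl group. -/
noncomputable def len (w : R.W) : ℕ :=
  sInf {n | ∃ l : List I, l.length = n ∧ (l.map R.s).prod = w}

/-- Bruhat order: generated by multiplication by reflections which increases length. -/
def bruhatLE : R.W → R.W → Prop :=
  Relation.ReflTransGen (fun u v => (∃ β, R.IsPos β ∧ v = R.refl β * u) ∧ R.len u < R.len v)

def bruhatLT (u v : R.W) : Prop := R.bruhatLE u v ∧ u ≠ v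

/-- The parabolic subgroup `W_J`. -/
def WJ (J : Set I) : Subgroup R.W := Subgroup.closure (R.s '' J)

/-- `w` is a minimal-length representative of its coset `w W_J`. -/
def IsMinRep (J : Set I) (w : R.W) : Prop :=
  ∀ z ∈ R.WJ J, R.len w ≤ R.len (w * z)

/-- `β ∈ Δ⁺_J`: positive roots in the span of the simple roots indexed by `J`. -/
def posJ (J : Set I) (β : R.V) : Prop :=
  R.IsPos β ∧ β ∈ Submodule.span ℚ (R.α '' J)

/-- A Bruhat edge `x → x s_β` in the quantum Bruhat graph. -/
def BruhatEdge (x : R.W) (β : R.V) : Prop :=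
  R.IsPos β ∧ R.len (x * R.refl β) = R.len x + 1

/-- A quantum edge `x → x s_β` in the quantum Bruhat graph. -/
def QuantumEdge (x : R.W) (β : R.V) : Prop :=
  R.IsPos β ∧ (R.len (x * R.refl β) : ℚ) = R.len x + 1 - 2 * R.coroot β R.ρ

/-- An edge of the quantum Bruhat graph. -/
def QBGEdge (x : R.W) (β : R.V) : Prop := R.BruhatEdge x β ∨ R.QuantumEdge x β

/-- A quantum root: `ℓ(s_β) = 2⟨ρ, β∨⟩ - 1`. -/
def IsQuantumRoot (β : R.V) : Prop :=
  R.IsPos β ∧ (R.len (R.refl β) : ℚ) = 2 * R.coroot β R.ρ - 1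

/-- A long root (maximal squared length); in simply-laced type all roots are long. -/
def IsLong (β : R.V) : Prop :=
  R.isRoot β ∧ ∀ γ, R.isRoot γ → R.B γ γ ≤ R.B β β

/-- A short root. -/
def IsShort (β : R.V) : Prop := R.isRoot β ∧ ¬ R.IsLong β

def IsSimplyLaced : Prop :=
  ∀ β γ, R.isRoot β → R.isRoot γ → R.B β β = R.B γ γ

def IsIrreducible : Prop :=
  Nonempty I ∧ ∀ J : Set I,
    (∀ i ∈ J, ∀ j ∉ J, R.B (R.α i) (R.α j) = 0) → J = ∅ ∨ J = Set.univ

/-- `θ` is the highest root. -/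
def IsHighestRoot (θ : R.V) : Prop :=
  R.IsPos θ ∧ ∀ β, R.IsPos β → ∃ c : I → ℕ, θ - β = ∑ i, (c i : ℚ) • R.α i

/-- `ϖ` is the fundamental weight associated to `k`. -/
def IsFundamental (k : I) (ϖ : R.V) : Prop :=
  ∀ i, R.coroot (R.α i) ϖ = if i = k then 1 else 0

/-- `ϖ` is minuscule. -/
def IsMinuscule (ϖ : R.V) : Prop :=
  ∀ β, R.isRoot β → R.coroot β ϖ ∈ ({-1, 0, 1} : Set ℚ)

/-- A strict total order on `Δ⁺` which is a reflection (convex) order. -/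
def IsReflectionOrder (lt : R.V → R.V → Prop) : Prop :=
  (∀ β, ¬ lt β β) ∧ (∀ a b c, lt a b → lt b c → lt a c) ∧
  (∀ β γ, R.IsPos β → R.IsPos γ → β ≠ γ → lt β γ ∨ lt γ β) ∧
  (∀ β γ, R.IsPos β → R.IsPos γ → R.IsPos (β + γ) →
    (lt β (β + γ) ∧ lt (β + γ) γ) ∨ (lt γ (β + γ) ∧ lt (β + γ) β))

end RootSystemData

open RootSystemData in
/-- A directed path in the quantum Bruhat graph with the given list of labels. -/
def QBGPath {I : Type} [Fintype I] [DecidableEq I] (R : RootSystemData I) :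
    R.W → List R.V → R.W → Prop
  | x, [], y => x = y
  | x, β :: l, y => R.QBGEdge x β ∧ QBGPath R (x * R.refl β) l y

open RootSystemData in
/-- A directed path in the Bruhat graph (Bruhat edges only). -/
def BGPath {I : Type} [Fintype I] [DecidableEq I] (R : RootSystemData I) :
    R.W → List R.V → R.W → Prop
  | x, [], y => x = y
  | x, β :: l, y => R.BruhatEdge x β ∧ BGPath R (x * R.refl β) l y

/-- The Cartan pairing `⟨α_j, α_i∨⟩` of type `B_n` (Bourbaki labelling, shifted
to be 0-based: the short simple root is the last one, index `n-1`). -/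
def BCartan (n : ℕ) (i j : Fin n) : ℚ :=
  if i = j then 2
  else if (i : ℕ) = n - 1 ∧ (j : ℕ) + 1 = n - 1 then -2
  else if ((i : ℕ) + 1 = j ∨ (j : ℕ) + 1 = i) then -1
  else 0

/-- `R` is of type `B_n` (via the identification `e` of its index set with `Fin n`). -/
def IsTypeB {I : Type} [Fintype I] [DecidableEq I] (R : RootSystemData I)
    (n : ℕ) (e : I ≃ Fin n) : Prop :=
  2 ≤ n ∧ ∀ i j, R.coroot (R.α i) (R.α j) = BCartan n (e i) (e j)

/-- The product `s_{a+1} s_{a+2} ⋯ s_{b+1}` (0-based: indices `a, a+1, …, b`). -/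
noncomputable def sSeq {n : ℕ} (hn : 0 < n) (R : RootSystemData (Fin n)) (a b : ℕ) : R.W :=
  ((List.range (b + 1 - a)).map (fun t => R.s ⟨(a + t) % n, Nat.mod_lt _ hn⟩)).prod

/-- The sum `α_{a+1} + ⋯ + α_b` of simple roots (0-based half-open interval `[a, b)`). -/
def aSum {n : ℕ} (hn : 0 < n) (R : RootSystemData (Fin n)) (a b : ℕ) : R.V :=
  ∑ t ∈ Finset.Ico a b, R.α ⟨t % n, Nat.mod_lt _ hn⟩

namespace RootSystemData

variable {I : Type} [Fintype I] [DecidableEq I] (R : RootSystemData I)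

lemma coord_unique {c d : I → ℚ} (h : ∑ i, c i • R.α i = ∑ i, d i • R.α i) : c = d := by
  funext k
  have h0 : ∑ i, (c i - d i) • R.α i = 0 := by
    simp only [sub_smul, Finset.sum_sub_distrib, h, sub_self]
  have := (Fintype.linearIndependent_iff.mp R.indep) (fun i => c i - d i) h0 k
  linarith

lemma root_ne_zero {β : R.V} (h : R.isRoot β) : β ≠ 0 := by
  intro h0
  have := R.B_pos β h
  rw [h0] at this
  simp at this

lemma Bii_pos (i : I) : 0 < R.B (R.α i) (R.α i) := R.B_pos _ (R.root_simple i)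

lemma coroot_def (β x : R.V) : R.coroot β x = 2 * R.B β x / R.B β β := rfl

lemma toLin_toLin (w : R.W) (x : R.V) : R.toLin w (R.toLin w⁻¹ x) = x := by
  have h : R.toLin w * R.toLin w⁻¹ = 1 := by rw [← map_mul, mul_inv_cancel, map_one]
  calc R.toLin w (R.toLin w⁻¹ x) = (R.toLin w * R.toLin w⁻¹) x := rfl
    _ = x := by rw [h]; rfl

lemma toLin_toLin' (w : R.W) (x : R.V) : R.toLin w⁻¹ (R.toLin w x) = x := by
  have := R.toLin_toLin w⁻¹ x; rwa [inv_inv] at this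

lemma coroot_inv (w : R.W) (β x : R.V) :
    R.coroot (R.toLin w β) (R.toLin w x) = R.coroot β x := by
  rw [coroot_def, coroot_def, R.B_inv, R.B_inv]

lemma s_act' (i : I) (x : R.V) :
    R.toLin (R.s i) x = x - R.coroot (R.α i) x • R.α i := R.s_act i x

lemma coroot_smul (β : R.V) (c : ℚ) (x : R.V) :
    R.coroot β (c • x) = c * R.coroot β x := by
  rw [coroot_def, coroot_def, map_smul]
  simp [smul_eq_mul]
  ring

lemma coroot_sub (β x y : R.V) :
    R.coroot β (x - y) = R.coroot β x - R.coroot β y := by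
  rw [coroot_def, coroot_def, coroot_def, map_sub]
  ring

lemma coroot_self {β : R.V} (h : R.isRoot β) : R.coroot β β = 2 := by
  rw [coroot_def, mul_div_assoc, div_self (R.B_pos β h).ne', mul_one]

lemma sigma_alpha (i : I) : R.toLin (R.s i) (R.α i) = -R.α i := by
  rw [R.s_act', R.coroot_self (R.root_simple i)]
  module

lemma sigma_sigma (i : I) (x : R.V) :
    R.toLin (R.s i) (R.toLin (R.s i) x) = x := by
  rw [R.s_act' i x, R.s_act', R.coroot_sub, R.coroot_smul, R.coroot_self (R.root_simple i)]
  module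

lemma s_mul_s (i : I) : R.s i * R.s i = 1 := by
  apply R.faithful
  rw [map_mul, map_one]
  exact LinearMap.ext fun x => R.sigma_sigma i x

lemma refl_apply {β : R.V} (h : R.isRoot β) (x : R.V) :
    R.toLin (R.refl β) x = x - R.coroot β x • β := by
  have hex : ∃ (w : R.W) (j : I), R.refl β = w * R.s j * w⁻¹ ∧ β = R.toLin w (R.α j) := by
    unfold RootSystemData.refl
    rw [dif_pos h]
    exact ⟨_, _, rfl, (R.root_gen β h).choose_spec.choose_spec⟩
  obtain ⟨w, j, hrefl, hβ⟩ := hex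
  rw [hrefl]
  simp only [map_mul, Module.End.mul_apply]
  rw [R.s_act']
  rw [map_sub, map_smul, R.toLin_toLin]
  have h1 : R.coroot (R.α j) (R.toLin w⁻¹ x) = R.coroot β x := by
    rw [hβ, ← R.coroot_inv w (R.α j) (R.toLin w⁻¹ x), R.toLin_toLin]
  rw [h1, ← hβ]

lemma exists_word (w : R.W) : ∃ l : List I, (l.map R.s).prod = w := by
  have hw : w ∈ Subgroup.closure (Set.range R.s) := by rw [R.gen]; trivial
  induction hw using Subgroup.closure_induction with
  | mem x hx =>
    obtain ⟨i, hi⟩ := hx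
    exact ⟨[i], by simp [hi]⟩
  | one => exact ⟨[], by simp⟩
  | mul x y hx hy ihx ihy =>
    obtain ⟨l, hl⟩ := ihx; obtain ⟨m, hm⟩ := ihy
    exact ⟨l ++ m, by rw [List.map_append, List.prod_append, hl, hm]⟩
  | inv x hx ihx =>
    obtain ⟨l, hl⟩ := ihx
    refine ⟨l.reverse, ?_⟩
    rw [List.map_reverse, List.prod_reverse_noncomm]
    have h2 : (l.map R.s).map (fun x => x⁻¹) = l.map R.s := by
      rw [List.map_map]
      congr 1
      funext j
      show (R.s j)⁻¹ = R.s j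
      rw [inv_eq_iff_mul_eq_one, R.s_mul_s]
    rw [h2, hl]

lemma len_le {w : R.W} {l : List I} (h : (l.map R.s).prod = w) : R.len w ≤ l.length :=
  Nat.sInf_le ⟨l, rfl, h⟩

lemma exists_word_len (w : R.W) : ∃ l : List I, (l.map R.s).prod = w ∧ l.length = R.len w := by
  obtain ⟨l, hl⟩ := R.exists_word w
  have h1 : R.len w ∈ {n | ∃ l : List I, l.length = n ∧ (l.map R.s).prod = w} :=
    Nat.sInf_mem ⟨l.length, l, rfl, hl⟩
  obtain ⟨m, hm1, hm2⟩ := h1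
  exact ⟨m, hm2, hm1⟩

lemma len_conj (i : I) (u : R.W) : R.len (R.s i * u * R.s i) ≤ R.len u + 2 := by
  obtain ⟨l, hl, hlen⟩ := R.exists_word_len u
  have h1 : ((i :: (l ++ [i])).map R.s).prod = R.s i * u * R.s i := by
    simp [List.prod_append, hl, mul_assoc]
  calc R.len (R.s i * u * R.s i) ≤ (i :: (l ++ [i])).length := R.len_le h1
    _ = R.len u + 2 := by simp [← hlen]

lemma isPos_alpha (i : I) : R.IsPos (R.α i) := by
  refine ⟨R.root_simple i, fun k => if k = i then 1 else 0, ?_⟩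
  symm
  calc ∑ k, (((if k = i then (1:ℕ) else 0) : ℕ) : ℚ) • R.α k
      = ∑ k, (if k = i then R.α k else 0) :=
        Finset.sum_congr rfl (fun k _ => by by_cases hk : k = i <;> simp [hk])
    _ = R.α i := by rw [Finset.sum_ite_eq']; simp

/-- Key positivity lemma, including reducedness of the root system. -/
lemma sigma_pos {β : R.V} (i : I) (hβ : R.IsPos β) (hne : β ≠ R.α i) :
    R.IsPos (R.toLin (R.s i) β) := by
  have hr' : R.isRoot (R.toLin (R.s i) β) := R.root_inv _ _ hβ.1
  rcases R.pos_or_neg _ hr' with hp | hn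
  · exact ⟨hr', hp⟩
  · exfalso
    obtain ⟨c, hc⟩ := hβ.2
    obtain ⟨d, hd⟩ := hn
    set t := R.coroot (R.α i) β with htdef
    have hσ : R.toLin (R.s i) β = β - t • R.α i := R.s_act' i β
    have key : (fun k => (c k : ℚ) + (d k : ℚ)) = (fun k => if k = i then t else 0) := by
      apply R.coord_unique
      have h1 : ∑ k, ((c k : ℚ) + (d k : ℚ)) • R.α k
          = β + (∑ k, (d k : ℚ) • R.α k) := by
        rw [Finset.sum_congr rfl (fun k _ => add_smul _ _ _), Finset.sum_add_distrib, ← hc]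
      have h2 : ∑ k, (if k = i then t else 0 : ℚ) • R.α k = t • R.α i := by
        rw [Finset.sum_congr rfl (fun k _ => by
          show (if k = i then t else 0 : ℚ) • R.α k = if k = i then t • R.α k else 0
          split <;> simp), Finset.sum_ite_eq']
        simp
      rw [h1, ← hd, h2, hσ]
      abel
    have hck : ∀ k, k ≠ i → (c k : ℚ) = 0 := by
      intro k hk
      have h3 := congrFun key k
      simp only [hk, if_false] at h3
      have hc0 : (0:ℚ) ≤ (c k : ℚ) := Nat.cast_nonneg _
      have hd0 : (0:ℚ) ≤ (d k : ℚ) := Nat.cast_nonneg _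
      linarith
    have hβci : β = (c i : ℚ) • R.α i := by
      rw [hc, Finset.sum_eq_single i (fun k _ hk => by rw [hck k hk, zero_smul]) (by simp)]
    obtain ⟨w, j, hwj⟩ := R.root_gen β hβ.1
    have hδ : R.isRoot (R.toLin w⁻¹ (R.α i)) := R.root_inv _ _ (R.root_simple i)
    have hαj : R.α j = (c i : ℚ) • R.toLin w⁻¹ (R.α i) := by
      have h4 : R.toLin w⁻¹ β = R.α j := by rw [hwj, R.toLin_toLin']
      rw [← h4, hβci, map_smul]
    obtain ⟨m, hm⟩ := R.root_int _ hδ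
    have key2 : (fun k => if k = j then (1:ℚ) else 0) = (fun k => (c i : ℚ) * (m k : ℚ)) := by
      apply R.coord_unique
      have h3 : ∑ k, (if k = j then (1:ℚ) else 0) • R.α k = R.α j := by
        rw [Finset.sum_congr rfl (fun k _ => by
          show (if k = j then (1:ℚ) else 0) • R.α k = if k = j then R.α k else 0
          split <;> simp), Finset.sum_ite_eq']
        simp
      rw [h3, hαj]
      conv_lhs => rw [hm]
      rw [Finset.smul_sum]
      exact Finset.sum_congr rfl (fun k _ => by rw [smul_smul])
    have h4 : (c i : ℚ) * (m j : ℚ) = 1 := by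
      have := congrFun key2 j
      simp at this
      linarith
    have h5 : (c i : ℤ) * m j = 1 := by exact_mod_cast h4
    have h6 : (c i : ℤ) = 1 := by
      rcases Int.isUnit_iff.mp (IsUnit.of_mul_eq_one _ h5) with h' | h'
      · exact h'
      · rw [h'] at h5; omega
    apply hne
    rw [hβci, show ((c i : ℚ)) = 1 by exact_mod_cast h6, one_smul]

lemma mem_posFinset {β : R.V} : β ∈ R.posFinset ↔ R.IsPos β := Set.Finite.mem_toFinset _

lemma neg_alpha_not_pos (i : I) : ¬ R.IsPos (-R.α i) := by
  rintro ⟨_, c, hc⟩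
  have key : (fun k => if k = i then (-1:ℚ) else 0) = (fun k => (c k : ℚ)) := by
    apply R.coord_unique
    rw [← hc]
    rw [Finset.sum_congr rfl (fun k _ => by
      show (if k = i then (-1:ℚ) else 0) • R.α k = if k = i then -R.α k else 0
      split <;> simp), Finset.sum_ite_eq']
    simp
  have h1 := congrFun key i
  simp at h1
  have h2 : (0:ℚ) ≤ (c i : ℚ) := Nat.cast_nonneg _
  linarith

lemma sum_pos_invariant (i : I) :
    R.toLin (R.s i) (∑ β ∈ R.posFinset, β) = (∑ β ∈ R.posFinset, β) - (2:ℚ) • R.α i := by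
  classical
  have hαmem : R.α i ∈ R.posFinset := R.mem_posFinset.mpr (R.isPos_alpha i)
  rw [map_sum]
  rw [← Finset.sum_erase_add _ _ hαmem, ← Finset.sum_erase_add _ (fun β => β) hαmem]
  rw [R.sigma_alpha]
  have hmaps : ∀ a ∈ R.posFinset.erase (R.α i),
      R.toLin (R.s i) a ∈ R.posFinset.erase (R.α i) := by
    intro a ha
    rw [Finset.mem_erase] at ha ⊢
    obtain ⟨hane, hap⟩ := ha
    rw [R.mem_posFinset] at hap ⊢
    refine ⟨?_, R.sigma_pos i hap hane⟩
    intro h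
    have h1 : a = R.toLin (R.s i) (R.α i) := by rw [← h, R.sigma_sigma]
    rw [R.sigma_alpha] at h1
    exact R.neg_alpha_not_pos i (h1 ▸ hap)
  have hbij : ∑ β ∈ R.posFinset.erase (R.α i), R.toLin (R.s i) β
      = ∑ β ∈ R.posFinset.erase (R.α i), β :=
    Finset.sum_nbij' (fun β => R.toLin (R.s i) β) (fun β => R.toLin (R.s i) β)
      hmaps hmaps (fun a _ => R.sigma_sigma i a) (fun a _ => R.sigma_sigma i a)
      (fun a _ => rfl)
  rw [hbij]
  module

lemma coroot_rho (i : I) : R.coroot (R.α i) R.ρ = 1 := by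
  set S := ∑ β ∈ R.posFinset, β with hS
  have h1 : R.toLin (R.s i) S = S - R.coroot (R.α i) S • R.α i := R.s_act' i S
  have h2 := R.sum_pos_invariant i
  rw [← hS] at h2
  have h3 : (R.coroot (R.α i) S - 2) • R.α i = 0 := by
    rw [sub_smul]
    have := h1.symm.trans h2
    have h4 := sub_right_injective this
    rw [h4]
    simp
  rcases smul_eq_zero.mp h3 with h | h
  · have h5 : R.coroot (R.α i) S = 2 := by linarith [h]
    show R.coroot (R.α i) ((2:ℚ)⁻¹ • S) = 1
    rw [R.coroot_smul, h5]
    norm_num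
  · exact absurd h (R.root_ne_zero (R.root_simple i))

lemma int_coroot_simple (j : I) {δ : R.V} (hδ : R.isRoot δ) :
    ∃ m : ℤ, R.coroot (R.α j) δ = m := by
  obtain ⟨m, hm⟩ := R.root_int δ hδ
  obtain ⟨m', hm'⟩ := R.root_int _ (R.root_inv (R.s j) δ hδ)
  set t := R.coroot (R.α j) δ with ht
  have key : (fun k => (m k : ℚ) - (if k = j then t else 0)) = (fun k => (m' k : ℚ)) := by
    apply R.coord_unique
    rw [Finset.sum_congr rfl (fun k _ => sub_smul _ _ _), Finset.sum_sub_distrib, ← hm, ← hm']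
    rw [Finset.sum_congr rfl (fun k _ => by
      show (if k = j then t else 0 : ℚ) • R.α k = if k = j then t • R.α k else 0
      split <;> simp), Finset.sum_ite_eq']
    simp [R.s_act' j δ, ← ht]
  have h1 := congrFun key j
  simp at h1
  exact ⟨m j - m' j, by push_cast; linarith⟩

lemma int_coroot {β δ : R.V} (hβ : R.isRoot β) (hδ : R.isRoot δ) :
    ∃ m : ℤ, R.coroot β δ = m := by
  obtain ⟨w, j, hwj⟩ := R.root_gen β hβ
  have h1 : R.coroot β δ = R.coroot (R.α j) (R.toLin w⁻¹ δ) := by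
    rw [hwj, ← R.coroot_inv w (R.α j) (R.toLin w⁻¹ δ), R.toLin_toLin]
  rw [h1]
  exact R.int_coroot_simple j (R.root_inv _ _ hδ)

lemma main (n : ℕ) : ∀ (β : R.V) (c : I → ℕ), R.isRoot β → β = ∑ i, (c i : ℚ) • R.α i →
    (∑ i, c i) = n → (R.len (R.refl β) : ℚ) ≤ 2 * R.coroot β R.ρ - 1 := by
  induction n using Nat.strong_induction_on with
  | _ n ih =>
  intro β c hr hc hn
  have hpos : R.IsPos β := ⟨hr, c, hc⟩
  have hBβ : 0 < R.B β β := R.B_pos β hr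
  have hsum : R.B β β = ∑ k, (c k : ℚ) * R.B (R.α k) β := by
    have h0 : ∀ y, R.B β y = ∑ k, (c k : ℚ) * R.B (R.α k) y := by
      intro y
      conv_lhs => rw [hc]
      simp [map_sum, LinearMap.sum_apply, map_smul, smul_eq_mul]
    exact h0 β
  have hex : ∃ i, 0 < (c i : ℚ) ∧ 0 < R.B (R.α i) β := by
    by_contra hcon
    push_neg at hcon
    have hle : R.B β β ≤ 0 := by
      rw [hsum]
      apply Finset.sum_nonpos
      intro k _
      rcases eq_or_lt_of_le (Nat.cast_nonneg (α := ℚ) (c k)) with h | h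
      · rw [← h, zero_mul]
      · exact mul_nonpos_of_nonneg_of_nonpos (le_of_lt h) (hcon k h)
    linarith
  obtain ⟨i, hci, hBi⟩ := hex
  set t := R.coroot (R.α i) β with htdef
  have ht : 0 < t := by
    rw [htdef, coroot_def]
    exact div_pos (by linarith) (R.Bii_pos i)
  by_cases hβi : β = R.α i
  · have hrefl : R.refl β = R.s i := by
      apply R.faithful
      apply LinearMap.ext
      intro x
      rw [R.refl_apply hr, R.s_act', hβi]
    rw [hrefl, hβi, R.coroot_rho]
    have h1 : R.len (R.s i) ≤ 1 := R.len_le (l := [i]) (by simp)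
    have h2 : (R.len (R.s i) : ℚ) ≤ 1 := by exact_mod_cast h1
    linarith
  · set β' := R.toLin (R.s i) β with hβ'def
    have hpos' : R.IsPos β' := R.sigma_pos i hpos hβi
    obtain ⟨d, hd⟩ := hpos'.2
    have hr' := hpos'.1
    have hσ : β' = β - t • R.α i := R.s_act' i β
    have key : (fun k => (c k : ℚ) - (if k = i then t else 0)) = (fun k => (d k : ℚ)) := by
      apply R.coord_unique
      rw [Finset.sum_congr rfl (fun k _ => sub_smul _ _ _), Finset.sum_sub_distrib, ← hc, ← hd]
      rw [Finset.sum_congr rfl (fun k _ => by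
        show (if k = i then t else 0 : ℚ) • R.α k = if k = i then t • R.α k else 0
        split <;> simp), Finset.sum_ite_eq']
      simp [hσ]
    have hdi : (d i : ℚ) = (c i : ℚ) - t := by
      have h3 := congrFun key i
      simp at h3
      linarith
    have hdilt : d i < c i := by
      have : (d i : ℚ) < (c i : ℚ) := by linarith
      exact_mod_cast this
    have ht1 : 1 ≤ t := by
      have h4 : ((d i : ℚ) + 1) ≤ (c i : ℚ) := by exact_mod_cast Nat.succ_le_of_lt hdilt
      linarith
    have hsd : (∑ k, (d k : ℚ)) = (∑ k, (c k : ℚ)) - t := by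
      rw [Finset.sum_congr rfl (fun k _ => (congrFun key k).symm),
        Finset.sum_sub_distrib, Finset.sum_ite_eq']
      simp
    have hlt : (∑ k, d k) < n := by
      have h5 : ((∑ k, d k : ℕ) : ℚ) < ((n : ℕ) : ℚ) := by
        push_cast
        rw [hsd, ← hn]
        push_cast
        linarith
      exact_mod_cast h5
    have IH := ih _ hlt β' d hr' hd rfl
    have hβback : R.toLin (R.s i) β' = β := by rw [hβ'def, R.sigma_sigma]
    have hconj : R.refl β = R.s i * R.refl β' * R.s i := by
      apply R.faithful
      apply LinearMap.ext
      intro x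
      simp only [map_mul, Module.End.mul_apply]
      rw [R.refl_apply hr, R.refl_apply hr', map_sub, map_smul, R.sigma_sigma, hβback]
      rw [show R.coroot β' (R.toLin (R.s i) x) = R.coroot β x from by
        rw [hβ'def]; exact R.coroot_inv (R.s i) β x]
    have hlen : (R.len (R.refl β) : ℚ) ≤ (R.len (R.refl β') : ℚ) + 2 := by
      have h6 := R.len_conj i (R.refl β')
      rw [← hconj] at h6
      exact_mod_cast h6
    have hrho : R.coroot β R.ρ = R.coroot β' R.ρ - R.coroot β' (R.α i) := by
      have h7 : R.coroot β R.ρ = R.coroot β' (R.toLin (R.s i) R.ρ) := by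
        rw [← hβback]
        conv_lhs => rw [← R.sigma_sigma i R.ρ]
        exact R.coroot_inv (R.s i) β' _
      have h8 : R.toLin (R.s i) R.ρ = R.ρ - R.α i := by
        rw [R.s_act', R.coroot_rho, one_smul]
      rw [h7, h8, R.coroot_sub]
    have hBβ' : 0 < R.B β' β' := R.B_pos _ hr'
    have hBneg : R.B β' (R.α i) < 0 := by
      have h9 : R.B (R.toLin (R.s i) β) (R.toLin (R.s i) (R.α i)) = R.B β (R.α i) :=
        R.B_inv _ _ _
      rw [R.sigma_alpha, map_neg, ← hβ'def] at h9
      have h10 : R.B β (R.α i) = R.B (R.α i) β := R.B_symm _ _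
      linarith
    have hcneg : R.coroot β' (R.α i) < 0 := by
      rw [coroot_def]
      exact div_neg_of_neg_of_pos (by linarith) hBβ'
    obtain ⟨m, hm⟩ := R.int_coroot hr' (R.root_simple i)
    have hm0 : m < 0 := by
      have : (m : ℚ) < 0 := by rw [← hm]; exact hcneg
      exact_mod_cast this
    have hfinal : R.coroot β' (R.α i) ≤ -1 := by
      rw [hm]
      have : m ≤ -1 := by omega
      exact_mod_cast this
    linarith

end RootSystemData

/-- For any positive root `β`, `ℓ(s_β) ≤ 2⟨ρ, β∨⟩ - 1`. -/
theorem stmt0 {I : Type} [Fintype I] [DecidableEq I] (R : RootSystemData I)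
    (hirr : R.IsIrreducible) (β : R.V) (hβ : R.IsPos β) :
    (R.len (R.refl β) : ℚ) ≤ 2 * R.coroot β R.ρ - 1 := by
  obtain ⟨c, hc⟩ := hβ.2
  exact R.main _ β c hβ.1 hc rfl
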